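/- Let G and H be two DAGs on the same vertex set with the same skeleton (underlying undirected graph). If G and H are not identical, then there exists an edge i → j in G with i ← j in H such that reversing the edge i → j in G yields a directed graph that is still acyclic. -/

import Mathlib

def Acyclic {V : Type*} (R : V → V → Prop) : Prop :=
  ∀ v, ¬ Relation.TransGen R v v

open Classical in
noncomputable def cimset {V : Type*} (G : V → V → Prop) (S : Finset V) : ℕ :=
  if ∃ i ∈ S, ∀ j ∈ S, j ≠ i → G j i then 1 else 0

open Relation

private lemma my_antisymm {V : Type*} {G : V → V → Prop} (hG : Acyclic G) {a b : V}
    (h1 : ReflTransGen G a b) (h2 : ReflTransGen G b a) : a = b := by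
  rcases h1.cases_head with h | ⟨c, hac, hcb⟩
  · exact h
  · by_contra hne
    exact hG a ((TransGen.head' hac hcb).trans_left h2)

/-- Decompose a cycle in the edge-reversed graph. -/
private lemma cycle_decomp {V : Type*} (G' : V → V → Prop) (i j : V) :
    ∀ a b, TransGen (fun a b => (a = j ∧ b = i) ∨ G' a b) a b →
      TransGen G' a b ∨ (ReflTransGen G' a j ∧ ReflTransGen G' i b) ∨
        ReflTransGen G' i j := by
  intro a b h
  induction h with
  | single hab =>
      rcases hab with ⟨rfl, rfl⟩ | h
      · exact Or.inr (Or.inl ⟨ReflTransGen.refl, ReflTransGen.refl⟩)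
      · exact Or.inl (TransGen.single h)
  | tail hab hbc ih =>
      rcases hbc with ⟨rfl, rfl⟩ | hbc
      · rcases ih with ih | ⟨h1, h2⟩ | ih
        · exact Or.inr (Or.inl ⟨ih.to_reflTransGen, ReflTransGen.refl⟩)
        · exact Or.inr (Or.inr h2)
        · exact Or.inr (Or.inr ih)
      · rcases ih with ih | ⟨h1, h2⟩ | ih
        · exact Or.inl (ih.tail hbc)
        · exact Or.inr (Or.inl ⟨h1, h2.tail hbc⟩)
        · exact Or.inr (Or.inr ih)

/-- Along a directed path, either all edges agree with H, or some edge disagrees. -/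
private lemma find_bad_edge {V : Type*} (G' H : V → V → Prop)
    (hs : ∀ a b, G' a b → ¬ H a b → H b a) :
    ∀ a b, ReflTransGen G' a b →
      ReflTransGen H a b ∨ ∃ x y, G' x y ∧ H y x ∧
        ReflTransGen G' a x ∧ ReflTransGen G' y b := by
  intro a b h
  induction h with
  | refl => exact Or.inl ReflTransGen.refl
  | @tail b' c' hab hbc ih =>
      rcases ih with ih | ⟨x, y, h1, h2, h3, h4⟩
      · by_cases hH : H b' c'
        · exact Or.inl (ih.tail hH)
        · exact Or.inr ⟨b', c', hbc, hs _ _ hbc hH, hab, ReflTransGen.refl⟩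
      · exact Or.inr ⟨x, y, h1, h2, h3, h4.tail hbc⟩

theorem stmt1 {V : Type*} [Fintype V] (G H : V → V → Prop)
    (hG : Acyclic G) (hH : Acyclic H)
    (hskel : ∀ a b, (G a b ∨ G b a) ↔ (H a b ∨ H b a))
    (hne : G ≠ H) :
    ∃ i j, G i j ∧ H j i ∧
      Acyclic (fun a b => (a = j ∧ b = i) ∨ (¬(a = i ∧ b = j) ∧ G a b)) := by
  classical
  -- The set of disagreeing edges is nonempty.
  have hD : ∃ p : V × V, G p.1 p.2 ∧ H p.2 p.1 := by
    by_contra hc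
    push_neg at hc
    apply hne
    funext a b
    apply propext
    constructor
    · intro hab
      by_contra hHab
      have := (hskel a b).mp (Or.inl hab)
      have hba : H b a := this.resolve_left hHab
      exact (hc (a, b) hab) hba
    · intro hab
      by_contra hGab
      have := (hskel a b).mpr (Or.inl hab)
      have hba : G b a := this.resolve_left hGab
      exact (hc (b, a) hba) hab
  -- Measure: size of the interval [p.1, p.2] in G.
  set μ : V × V → ℕ := fun p =>
    (Finset.univ.filter fun k => ReflTransGen G p.1 k ∧ ReflTransGen G k p.2).card with hμ
  haveI : Nonempty {p : V × V // G p.1 p.2 ∧ H p.2 p.1} := ⟨⟨hD.choose, hD.choose_spec⟩⟩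
  obtain ⟨⟨⟨i, j⟩, hGij, hHji⟩, hmin⟩ :=
    Finite.exists_min (fun p : {p : V × V // G p.1 p.2 ∧ H p.2 p.1} => μ p.1)
  refine ⟨i, j, hGij, hHji, ?_⟩
  by_contra hcyc
  obtain ⟨v, hv⟩ := not_forall.mp hcyc
  have hv : Relation.TransGen
      (fun a b => (a = j ∧ b = i) ∨ (¬(a = i ∧ b = j) ∧ G a b)) v v := not_not.mp hv
  have hij : i ≠ j := by
    rintro rfl
    exact hG i (TransGen.single hGij)
  set G' : V → V → Prop := fun a b => ¬(a = i ∧ b = j) ∧ G a b with hG'def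
  have hG'G : ∀ a b, G' a b → G a b := fun a b h => h.2
  -- extract a G'-path from i to j
  have hpath : ReflTransGen G' i j := by
    have := cycle_decomp G' i j v v hv
    rcases this with h | ⟨h1, h2⟩ | h
    · exact absurd (TransGen.mono hG'G _ _ h) (hG v)
    · exact h2.trans h1
    · exact h
  -- find a disagreeing edge along the path
  have hs : ∀ a b, G' a b → ¬ H a b → H b a := by
    intro a b hab hnH
    exact ((hskel a b).mp (Or.inl (hab.2))).resolve_left hnH
  rcases find_bad_edge G' H hs i j hpath with hHij | ⟨x, y, hxy, hyx, hix, hyj⟩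
  · -- would give a cycle in H
    rcases hHij.cases_head with h | ⟨c, hic, hcj⟩
    · exact hij h
    · exact hH i (TransGen.tail (TransGen.head' hic hcj) hHji)
  · -- the disagreeing edge has strictly smaller interval, contradiction with minimality
    have hxyne : ¬(x = i ∧ y = j) := hxy.1
    have hGxy : G x y := hxy.2
    have hixG : ReflTransGen G i x := ReflTransGen.mono hG'G _ _ hix
    have hyjG : ReflTransGen G y j := ReflTransGen.mono hG'G _ _ hyj
    have hsub : (Finset.univ.filter fun k => ReflTransGen G x k ∧ ReflTransGen G k y) ⊆
        (Finset.univ.filter fun k => ReflTransGen G i k ∧ ReflTransGen G k j) := by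
      intro k hk
      simp only [Finset.mem_filter, Finset.mem_univ, true_and] at hk ⊢
      exact ⟨hixG.trans hk.1, hk.2.trans hyjG⟩
    have hssub : (Finset.univ.filter fun k => ReflTransGen G x k ∧ ReflTransGen G k y) ⊂
        (Finset.univ.filter fun k => ReflTransGen G i k ∧ ReflTransGen G k j) := by
      rw [Finset.ssubset_iff_of_subset hsub]
      by_cases hxi : x = i
      · subst hxi
        have hyj' : y ≠ j := fun h => hxyne ⟨rfl, h⟩
        refine ⟨j, ?_, ?_⟩
        · simp only [Finset.mem_filter, Finset.mem_univ, true_and]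
          exact ⟨ReflTransGen.single hGij, ReflTransGen.refl⟩
        · simp only [Finset.mem_filter, Finset.mem_univ, true_and, not_and]
          exact fun _ hjy => hyj' (my_antisymm hG hyjG hjy)
      · refine ⟨i, ?_, ?_⟩
        · simp only [Finset.mem_filter, Finset.mem_univ, true_and]
          exact ⟨ReflTransGen.refl, ReflTransGen.single hGij⟩
        · simp only [Finset.mem_filter, Finset.mem_univ, true_and, not_and]
          exact fun hxi' _ => hxi (my_antisymm hG hixG hxi').symm
    have hlt : μ (x, y) < μ (i, j) := Finset.card_lt_card hssub
    have := hmin ⟨(x, y), hGxy, hyx⟩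
    simp only at this
    omega
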